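/- For every n ≡ 1 (mod 9) with n ≥ 10, there exists a connected graph of order n with at least 36^{(n−1)/9} minimal connected dominating sets; hence the maximum number of minimal connected dominating sets in a connected n-vertex graph is in Ω(1.4890^n). -/

import Mathlib

/-- `S` is a connected dominating set of `G`. -/
def IsCDS {V : Type*} (G : SimpleGraph V) (S : Set V) : Prop :=
  (∀ v, v ∈ S ∨ ∃ u ∈ S, G.Adj u v) ∧ (G.induce S).Connected

/-- `S` is an inclusion-minimal connected dominating set of `G`. -/
def IsMinCDS {V : Type*} (G : SimpleGraph V) (S : Set V) : Prop :=
  IsCDS G S ∧ ∀ T : Set V, T ⊂ S → ¬ IsCDS G T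


set_option maxRecDepth 100000

/-- Adjacency inside one copy of the gadget `G₄` on `Fin 9`:
vertices `0..3` are the clique `X`, `4..7` are the independent set `Y`
(`y j` is `j + 4`, adjacent to `x i` iff `i ≠ j`), `8` is `z`, adjacent to all of `Y`. -/
def adj9 (a b : Fin 9) : Prop :=
  (a.val < 4 ∧ b.val < 4 ∧ a ≠ b) ∨
  (a.val < 4 ∧ 4 ≤ b.val ∧ b.val < 8 ∧ b.val ≠ a.val + 4) ∨
  (b.val < 4 ∧ 4 ≤ a.val ∧ a.val < 8 ∧ a.val ≠ b.val + 4) ∨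
  (a.val = 8 ∧ 4 ≤ b.val ∧ b.val < 8) ∨
  (b.val = 8 ∧ 4 ≤ a.val ∧ a.val < 8)

instance : DecidableRel adj9 := fun a b => by unfold adj9; infer_instance

lemma adj9_symm : ∀ a b, adj9 a b → adj9 b a := by decide
lemma adj9_irrefl : ∀ a, ¬ adj9 a a := by decide

/-- The 36 local configurations, as triples of vertices of `Fin 9`. -/
def encT : Fin 36 → Fin 9 × Fin 9 × Fin 9
  | 0 => (0, 1, 4)
  | 1 => (0, 2, 4)
  | 2 => (0, 3, 4)
  | 3 => (1, 2, 4)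
  | 4 => (1, 3, 4)
  | 5 => (2, 3, 4)
  | 6 => (0, 1, 5)
  | 7 => (0, 2, 5)
  | 8 => (0, 3, 5)
  | 9 => (1, 2, 5)
  | 10 => (1, 3, 5)
  | 11 => (2, 3, 5)
  | 12 => (0, 1, 6)
  | 13 => (0, 2, 6)
  | 14 => (0, 3, 6)
  | 15 => (1, 2, 6)
  | 16 => (1, 3, 6)
  | 17 => (2, 3, 6)
  | 18 => (0, 1, 7)
  | 19 => (0, 2, 7)
  | 20 => (0, 3, 7)
  | 21 => (1, 2, 7)
  | 22 => (1, 3, 7)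
  | 23 => (2, 3, 7)
  | 24 => (0, 5, 8)
  | 25 => (0, 6, 8)
  | 26 => (0, 7, 8)
  | 27 => (1, 4, 8)
  | 28 => (1, 6, 8)
  | 29 => (1, 7, 8)
  | 30 => (2, 4, 8)
  | 31 => (2, 5, 8)
  | 32 => (2, 7, 8)
  | 33 => (3, 4, 8)
  | 34 => (3, 5, 8)
  | _ => (3, 6, 8)

/-- The 36 local configurations as subsets of `Fin 9`. -/
def enc (d : Fin 36) : Finset (Fin 9) := {(encT d).1, (encT d).2.1, (encT d).2.2}

lemma enc_mem (d : Fin 36) (a : Fin 9) :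
    a ∈ enc d ↔ a = (encT d).1 ∨ a = (encT d).2.1 ∨ a = (encT d).2.2 := by
  simp [enc]

/-- Membership in the subset of a configuration selected by three Boolean flags. -/
def mem3 (e : Fin 9 × Fin 9 × Fin 9) (s : Bool × Bool × Bool) (a : Fin 9) : Prop :=
  (s.1 = true ∧ a = e.1) ∨ (s.2.1 = true ∧ a = e.2.1) ∨ (s.2.2 = true ∧ a = e.2.2)

instance (e : Fin 9 × Fin 9 × Fin 9) (s : Bool × Bool × Bool) (a : Fin 9) :
    Decidable (mem3 e s a) := by unfold mem3; infer_instance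

/-- P1: every `y`/`z` vertex is dominated by each configuration. -/
lemma encP1 : ∀ d, ∀ v : Fin 9, 4 ≤ v.val → v ∈ enc d ∨ ∃ u ∈ enc d, adj9 u v := by decide

/-- P2: every configuration contains an `X`-vertex. -/
lemma encP2 : ∀ d, ∃ u ∈ enc d, u.val < 4 := by decide

/-- P3: inside a configuration, every vertex is within distance 2 of an `X`-vertex. -/
lemma encP3 : ∀ d, ∀ v ∈ enc d, v.val < 4 ∨ (∃ u ∈ enc d, u.val < 4 ∧ adj9 v u) ∨
    (∃ u ∈ enc d, ∃ w ∈ enc d, adj9 v u ∧ adj9 u w ∧ w.val < 4) := by decide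

/-- P4: the 36 configurations are pairwise distinct. -/
lemma encP4 : ∀ d d' : Fin 36, enc d = enc d' → d = d' := by decide

/-- P5: any proper subset of a configuration either leaves some `y`/`z` vertex
of the copy undominated, or contains a nonempty set of `y`/`z` vertices closed
under adjacency within the subset (hence cut off from all `X`-vertices). -/
lemma encP5 : ∀ d : Fin 36, ∀ s : Bool × Bool × Bool,
    ¬ (s.1 = true ∧ s.2.1 = true ∧ s.2.2 = true) →
    (∃ v : Fin 9, 4 ≤ v.val ∧ ¬ mem3 (encT d) s v ∧
        ∀ u, mem3 (encT d) s u → ¬ adj9 u v) ∨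
    (∃ t : Bool × Bool × Bool,
        (t.1 = true → s.1 = true) ∧ (t.2.1 = true → s.2.1 = true) ∧
        (t.2.2 = true → s.2.2 = true) ∧ (t.1 = true ∨ t.2.1 = true ∨ t.2.2 = true) ∧
        (∀ a, mem3 (encT d) t a → 4 ≤ a.val) ∧
        (∀ a, mem3 (encT d) t a → ∀ u, mem3 (encT d) s u → adj9 a u →
          mem3 (encT d) t u)) := by decide

/-- Vertex type: `k` copies of the 9-vertex gadget plus a hub `none`. -/
abbrev Vk (k : ℕ) := Option (Fin k × Fin 9)

/-- Global adjacency: hub is adjacent to all `X`-vertices, all `X`-vertices of all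
copies form a clique, and within each copy we use `adj9`. -/
def gAdj {k : ℕ} : Vk k → Vk k → Prop
  | none, none => False
  | none, some p => p.2.val < 4
  | some p, none => p.2.val < 4
  | some p, some q => (p.1 = q.1 ∧ adj9 p.2 q.2) ∨ (p.1 ≠ q.1 ∧ p.2.val < 4 ∧ q.2.val < 4)

/-- The witnessing connected graph of order `9k + 1`. -/
def Gk (k : ℕ) : SimpleGraph (Vk k) where
  Adj := gAdj
  symm := by
    constructor
    rintro (_ | ⟨i, a⟩) (_ | ⟨j, b⟩) h
    · exact h
    · exact h
    · exact h
    · rcases h with ⟨hij, hab⟩ | ⟨hij, ha, hb⟩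
      · exact Or.inl ⟨hij.symm, adj9_symm _ _ hab⟩
      · exact Or.inr ⟨fun e => hij e.symm, hb, ha⟩
  loopless := by
    constructor
    rintro (_ | ⟨i, a⟩) h
    · exact h
    · rcases h with ⟨_, hab⟩ | ⟨hij, _⟩
      · exact adj9_irrefl _ hab
      · exact hij rfl

/-- The candidate minimal connected dominating set attached to a choice of a
configuration in each copy. -/
def SC {k : ℕ} (c : Fin k → Fin 36) : Set (Vk k) :=
  {v | match v with
       | none => False
       | some p => p.2 ∈ enc (c p.1)}

lemma SC_none {k : ℕ} (c : Fin k → Fin 36) : none ∉ SC c := fun h => h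

lemma SC_some {k : ℕ} (c : Fin k → Fin 36) (i : Fin k) (a : Fin 9) :
    some (i, a) ∈ SC c ↔ a ∈ enc (c i) := Iff.rfl

/-- Walks in an induced subgraph stay inside a set closed under adjacency. -/
lemma sep_lemma {W : Type*} (H : SimpleGraph W) (S A : Set W)
    (hcl : ∀ u ∈ A, ∀ v ∈ S, H.Adj u v → v ∈ A) :
    ∀ {u v : ↥S}, (H.induce S).Walk u v → (u : W) ∈ A → (v : W) ∈ A := by
  intro u v p
  induction p with
  | nil => exact id
  | cons h _ ih => exact fun hu => ih (hcl _ hu _ (Subtype.coe_prop _) h)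

/-- Global connectivity helper: every gadget vertex is within distance 2 of `X`. -/
lemma reachGlobal : ∀ a : Fin 9, a.val < 4 ∨ (∃ u, u.val < 4 ∧ adj9 a u) ∨
    (∃ u w, adj9 a u ∧ adj9 u w ∧ w.val < 4) := by decide

lemma Gk_connected (k : ℕ) : (Gk k).Connected := by
  rw [SimpleGraph.connected_iff]
  refine ⟨?_, ⟨none⟩⟩
  have key : ∀ v : Vk k, (Gk k).Reachable v none := by
    rintro (_ | ⟨i, a⟩)
    · exact SimpleGraph.Reachable.refl _
    · rcases reachGlobal a with h4 | ⟨u, hu4, hadj⟩ | ⟨u, w, h1, h2, hw4⟩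
      · exact SimpleGraph.Adj.reachable (show (Gk k).Adj (some (i, a)) none from h4)
      · exact (SimpleGraph.Adj.reachable
          (show (Gk k).Adj (some (i, a)) (some (i, u)) from Or.inl ⟨rfl, hadj⟩)).trans
          (SimpleGraph.Adj.reachable (show (Gk k).Adj (some (i, u)) none from hu4))
      · exact (SimpleGraph.Adj.reachable
          (show (Gk k).Adj (some (i, a)) (some (i, u)) from Or.inl ⟨rfl, h1⟩)).trans
          (((SimpleGraph.Adj.reachable
            (show (Gk k).Adj (some (i, u)) (some (i, w)) from Or.inl ⟨rfl, h2⟩))).trans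
          (SimpleGraph.Adj.reachable (show (Gk k).Adj (some (i, w)) none from hw4)))
  exact fun u v => (key u).trans (key v).symm

lemma iadj {k : ℕ} (S : Set (Vk k)) (u v : ↥S) (h : (Gk k).Adj ↑u ↑v) :
    ((Gk k).induce S).Adj u v := h

lemma SC_isCDS {k : ℕ} (hk : 0 < k) (c : Fin k → Fin 36) : IsCDS (Gk k) (SC c) := by
  constructor
  · -- domination
    rintro (_ | ⟨i, a⟩)
    · obtain ⟨u, hu, hu4⟩ := encP2 (c ⟨0, hk⟩)
      exact Or.inr ⟨some (⟨0, hk⟩, u), hu, show (Gk k).Adj _ none from hu4⟩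
    · by_cases ha : a ∈ enc (c i)
      · exact Or.inl ha
      · refine Or.inr ?_
        by_cases h4 : 4 ≤ a.val
        · rcases encP1 (c i) a h4 with h | ⟨u, hu, hadj⟩
          · exact absurd h ha
          · exact ⟨some (i, u), hu, Or.inl ⟨rfl, hadj⟩⟩
        · obtain ⟨u, hu, hu4⟩ := encP2 (c i)
          have hne : u ≠ a := fun e => ha (e ▸ hu)
          exact ⟨some (i, u), hu, Or.inl ⟨rfl, Or.inl ⟨hu4, (by omega : a.val < 4), hne⟩⟩⟩
  · -- connectivity
    obtain ⟨u₀, hu₀, hu₀4⟩ := encP2 (c ⟨0, hk⟩)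
    have hx₀ : some (⟨0, hk⟩, u₀) ∈ SC c := hu₀
    rw [SimpleGraph.connected_iff]
    refine ⟨?_, ⟨⟨some (⟨0, hk⟩, u₀), hx₀⟩⟩⟩
    have xreach : ∀ (i : Fin k) (b : Fin 9) (hb : some (i, b) ∈ SC c), b.val < 4 →
        ((Gk k).induce (SC c)).Reachable ⟨some (i, b), hb⟩ ⟨some (⟨0, hk⟩, u₀), hx₀⟩ := by
      intro i b hb hb4
      by_cases he : (⟨some (i, b), hb⟩ : ↥(SC c)) = ⟨some (⟨0, hk⟩, u₀), hx₀⟩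
      · rw [he]
      · refine SimpleGraph.Adj.reachable (iadj _ _ _ ?_)
        by_cases hi : i = ⟨0, hk⟩
        · subst hi
          have hne : b ≠ u₀ := by
            intro h; subst h; exact he rfl
          exact Or.inl ⟨rfl, Or.inl ⟨hb4, hu₀4, hne⟩⟩
        · exact Or.inr ⟨hi, hb4, hu₀4⟩
    have key : ∀ w : ↥(SC c),
        ((Gk k).induce (SC c)).Reachable w ⟨some (⟨0, hk⟩, u₀), hx₀⟩ := by
      rintro ⟨(_ | ⟨i, a⟩), hw⟩
      · exact absurd hw (SC_none c)
      · rcases encP3 (c i) a hw with h4 | ⟨u, hu, hu4, hadj⟩ |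
          ⟨u, hu, w', hw', h1, h2, hw4⟩
        · exact xreach i a hw h4
        · exact (SimpleGraph.Adj.reachable (iadj _ ⟨some (i, a), hw⟩ ⟨some (i, u), hu⟩
            (Or.inl ⟨rfl, hadj⟩))).trans (xreach i u hu hu4)
        · exact (SimpleGraph.Adj.reachable (iadj _ ⟨some (i, a), hw⟩ ⟨some (i, u), hu⟩
            (Or.inl ⟨rfl, h1⟩))).trans
            ((SimpleGraph.Adj.reachable (iadj _ ⟨some (i, u), hu⟩ ⟨some (i, w'), hw'⟩
              (Or.inl ⟨rfl, h2⟩))).trans (xreach i w' hw' hw4))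
    exact fun u v => (key u).trans (key v).symm

lemma SC_min {k : ℕ} (c : Fin k → Fin 36) (T : Set (Vk k)) (hT : T ⊂ SC c) :
    ¬ IsCDS (Gk k) T := by
  classical
  intro hCDS
  have hTS : T ⊆ SC c := hT.subset
  obtain ⟨m, hmS, hmT⟩ := Set.exists_of_ssubset hT
  rcases m with _ | ⟨i₀, e⟩
  · exact SC_none c hmS
  have he : e ∈ enc (c i₀) := hmS
  set d := c i₀ with hd
  set E := encT d with hE
  set s : Bool × Bool × Bool :=
    (decide (some (i₀, E.1) ∈ T), decide (some (i₀, E.2.1) ∈ T),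
      decide (some (i₀, E.2.2) ∈ T)) with hs
  have hmem : ∀ a : Fin 9, mem3 E s a ↔ some (i₀, a) ∈ T := by
    intro a
    constructor
    · rintro (⟨h, rfl⟩ | ⟨h, rfl⟩ | ⟨h, rfl⟩) <;> exact of_decide_eq_true h
    · intro haB
      rcases (enc_mem d a).1 (hTS haB) with rfl | rfl | rfl
      · exact Or.inl ⟨decide_eq_true haB, rfl⟩
      · exact Or.inr (Or.inl ⟨decide_eq_true haB, rfl⟩)
      · exact Or.inr (Or.inr ⟨decide_eq_true haB, rfl⟩)
  have hnot : ¬ (s.1 = true ∧ s.2.1 = true ∧ s.2.2 = true) := by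
    rintro ⟨h1, h2, h3⟩
    rcases (enc_mem d e).1 he with he' | he' | he'
    · exact hmT (he' ▸ of_decide_eq_true h1)
    · exact hmT (he' ▸ of_decide_eq_true h2)
    · exact hmT (he' ▸ of_decide_eq_true h3)
  rcases encP5 d s hnot with ⟨v, h4, hvB, hvadj⟩ | ⟨t, ht1, ht2, ht3, htne, htY, htcl⟩
  · -- a `y`/`z` vertex of copy `i₀` is undominated
    rcases hCDS.1 (some (i₀, v)) with hvT | ⟨u, huT, hadj⟩
    · exact hvB ((hmem v).2 hvT)
    · rcases u with _ | ⟨j, b⟩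
      · exact SC_none c (hTS huT)
      · have hadj' : (j = i₀ ∧ adj9 b v) ∨ (j ≠ i₀ ∧ b.val < 4 ∧ v.val < 4) := hadj
        rcases hadj' with ⟨hij, hadj9⟩ | ⟨_, _, hv4⟩
        · rw [hij] at huT
          exact hvadj b ((hmem b).2 huT) hadj9
        · omega
  · -- a stranded nonempty set of `y`/`z` vertices in copy `i₀`
    by_cases hx : ∃ u ∈ T, ∃ jb : Fin k × Fin 9, u = some jb ∧ jb.2.val < 4
    · obtain ⟨u0, hu0T, ⟨j, b⟩, rfl, hb4⟩ := hx
      set A : Set (Vk k) := {w | ∃ a : Fin 9, w = some (i₀, a) ∧ mem3 E t a} with hA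
      have hclosed : ∀ w ∈ A, ∀ w' ∈ T, (Gk k).Adj w w' → w' ∈ A := by
        rintro w ⟨a, rfl, hta⟩ w' hw' hadj
        rcases w' with _ | ⟨j', b'⟩
        · exact absurd (hTS hw') (SC_none c)
        · have hadj' : (i₀ = j' ∧ adj9 a b') ∨ (i₀ ≠ j' ∧ a.val < 4 ∧ b'.val < 4) := hadj
          rcases hadj' with ⟨hij, hadj9⟩ | ⟨_, ha4, _⟩
          · rw [← hij] at hw'
            exact ⟨b', by rw [hij], htcl a hta b' ((hmem b').2 hw') hadj9⟩
          · exact absurd ha4 (by have := htY a hta; omega)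
      obtain ⟨a₀, hta₀⟩ : ∃ a, mem3 E t a := by
        rcases htne with h | h | h
        · exact ⟨E.1, Or.inl ⟨h, rfl⟩⟩
        · exact ⟨E.2.1, Or.inr (Or.inl ⟨h, rfl⟩)⟩
        · exact ⟨E.2.2, Or.inr (Or.inr ⟨h, rfl⟩)⟩
      have ha₀T : some (i₀, a₀) ∈ T := by
        apply (hmem a₀).1
        rcases hta₀ with ⟨h, rfl⟩ | ⟨h, rfl⟩ | ⟨h, rfl⟩
        · exact Or.inl ⟨ht1 h, rfl⟩
        · exact Or.inr (Or.inl ⟨ht2 h, rfl⟩)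
        · exact Or.inr (Or.inr ⟨ht3 h, rfl⟩)
      have hu0A : some (j, b) ∉ A := by
        rintro ⟨a, heq, hta⟩
        injection heq with heq'
        have hba : b = a := congrArg Prod.snd heq'
        have hb4' : b.val < 4 := hb4
        have h4a := htY a hta
        rw [hba] at hb4'
        omega
      obtain ⟨p⟩ := hCDS.2.preconnected ⟨some (i₀, a₀), ha₀T⟩ ⟨some (j, b), hu0T⟩
      exact hu0A (sep_lemma (Gk k) T A hclosed p ⟨a₀, rfl, hta₀⟩)
    · -- no `X`-vertex in `T`: the hub is undominated
      rcases hCDS.1 none with hnT | ⟨u, huT, hadj⟩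
      · exact SC_none c (hTS hnT)
      · rcases u with _ | ⟨j, b⟩
        · exact hadj
        · exact hx ⟨some (j, b), huT, (j, b), rfl, hadj⟩

lemma SC_inj {k : ℕ} : Function.Injective (fun c : Fin k → Fin 36 => SC c) := by
  intro c c' h
  funext i
  exact encP4 _ _ (Finset.ext fun a => Set.ext_iff.1 h (some (i, a)))

theorem stmt15 (n : ℕ) (hmod : n % 9 = 1) (hn : 10 ≤ n) :
    ∃ (V : Type) (_ : Fintype V) (G : SimpleGraph V),
      Fintype.card V = n ∧ G.Connected ∧
      36 ^ ((n - 1) / 9) ≤ {S : Set V | IsMinCDS G S}.ncard := by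
  set k := (n - 1) / 9 with hk
  have h9 : 9 * k = n - 1 := by omega
  have hk1 : 0 < k := by omega
  refine ⟨Vk k, inferInstance, Gk k, ?_, Gk_connected k, ?_⟩
  · simp only [Vk, Fintype.card_option, Fintype.card_prod, Fintype.card_fin]
    omega
  · have hsub : Set.range (fun c : Fin k → Fin 36 => SC c) ⊆ {S | IsMinCDS (Gk k) S} := by
      rintro S ⟨c, rfl⟩
      exact ⟨SC_isCDS hk1 c, fun T hT => SC_min c T hT⟩
    have h1 : Nat.card (Fin k → Fin 36) = 36 ^ k := by simp
    have h2 := Nat.card_range_of_injective (SC_inj (k := k))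
    have h3 : (Set.range fun c : Fin k → Fin 36 => SC c).ncard ≤
        {S | IsMinCDS (Gk k) S}.ncard :=
      Set.ncard_le_ncard hsub (Set.toFinite _)
    calc 36 ^ ((n - 1) / 9) = Nat.card (Fin k → Fin 36) := by rw [h1]
      _ = (Set.range fun c : Fin k → Fin 36 => SC c).ncard := by
          rw [← h2, Nat.card_coe_set_eq]
      _ ≤ _ := h3
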